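/- Let u:(0,∞)→(0,∞) be non-increasing and satisfy u(t) ≤ C t^{−1} φ(t^{−1})^{−1} for all t > 0, where φ:(0,∞)→(0,∞) is increasing. If d ≥ 3, then the function g(r) = ∫₀^∞ (4πt)^{−d/2} e^{−r²/(4t)} u(t) dt satisfies g(r) ≤ c r^{−d} φ(r^{−2})^{−1} for all r > 0, for some c = c(d, C) > 0. -/

import Mathlib

open MeasureTheory

private lemma exp_neg_le_factorial_div (n : ℕ) {x : ℝ} (hx : 0 < x) :
    Real.exp (-x) ≤ (n.factorial : ℝ) / x ^ n := by
  have h1 : x ^ n / (n.factorial : ℝ) ≤ Real.exp x := by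
    calc x ^ n / (n.factorial : ℝ)
        ≤ ∑ i ∈ Finset.range (n + 1), x ^ i / (i.factorial : ℝ) := by
          refine Finset.single_le_sum (f := fun i => x ^ i / (i.factorial : ℝ)) ?_ ?_
          · intro i _; positivity
          · simp
      _ ≤ Real.exp x := Real.sum_le_exp_of_nonneg hx.le _
  have hxn : (0:ℝ) < x ^ n / (n.factorial : ℝ) := by positivity
  have hfac : (0:ℝ) < (n.factorial : ℝ) := by positivity
  have h2 : x ^ n ≤ Real.exp x * (n.factorial : ℝ) := (div_le_iff₀ hfac).mp h1
  rw [Real.exp_neg, inv_eq_one_div, div_le_div_iff₀ (Real.exp_pos x) (pow_pos hx n)]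
  linarith

/-- Upper bound for the Green function of a subordinate Brownian motion, d ≥ 3. -/
theorem green_function_upper_bound
    (d : ℕ) (hd : 3 ≤ d) (u φ : ℝ → ℝ) (C : ℝ) (hC : 0 < C)
    (hφpos : ∀ x > 0, 0 < φ x)
    (hφmono : ∀ x y : ℝ, 0 < x → x ≤ y → φ x ≤ φ y)
    (hupos : ∀ t > 0, 0 < u t)
    (humono : ∀ s t : ℝ, 0 < s → s ≤ t → u t ≤ u s)
    (huub : ∀ t > 0, u t ≤ C * t⁻¹ * (φ t⁻¹)⁻¹) :
    ∃ c > 0, ∀ r > 0,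
      (∫⁻ t in Set.Ioi (0:ℝ),
        ENNReal.ofReal ((4 * Real.pi * t) ^ (-(d:ℝ)/2) * Real.exp (-(r^2 / (4*t))) * u t))
      ≤ ENNReal.ofReal (c * r ^ (-(d:ℝ)) * (φ ((r^2)⁻¹))⁻¹) := by
  have hd3 : (3:ℝ) ≤ (d:ℝ) := by exact_mod_cast hd
  set p : ℝ := (d:ℝ)/2 with hp
  have hp1 : 1 < p := by rw [hp]; linarith
  have hp0 : 0 < p := by linarith
  have hπ : (0:ℝ) < 4 * Real.pi := by positivity
  set A : ℝ := (4 * Real.pi) ^ (-(d:ℝ)/2) with hA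
  have hApos : 0 < A := Real.rpow_pos_of_pos hπ _
  set K : ℝ := (d.factorial : ℝ) * 4 ^ d / p + 1 / (p - 1) with hK
  have hKpos : 0 < K := by
    have : (0:ℝ) < (d.factorial : ℝ) := by positivity
    have h1 : (0:ℝ) < (d.factorial : ℝ) * 4 ^ d / p := by positivity
    have h2 : (0:ℝ) < 1 / (p - 1) := by
      apply div_pos one_pos; linarith
    rw [hK]; linarith
  refine ⟨C * A * K, mul_pos (mul_pos hC hApos) hKpos, ?_⟩
  intro r hr
  set R : ℝ := r ^ 2 with hRdef
  have hRpos : 0 < R := by positivity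
  have hQ0 : 0 < φ R⁻¹ := hφpos _ (by positivity)
  set Q : ℝ := (φ R⁻¹)⁻¹ with hQdef
  have hQpos : 0 < Q := by positivity
  set B1 : ℝ := C * A * Q * (d.factorial : ℝ) * 4 ^ d * r ^ (-(2:ℝ) * (d:ℝ)) with hB1
  set B2 : ℝ := C * A * Q * R⁻¹ with hB2
  have hB1pos : 0 < B1 := by
    have : (0:ℝ) < r ^ (-(2:ℝ) * (d:ℝ)) := Real.rpow_pos_of_pos hr _
    have hf : (0:ℝ) < (d.factorial : ℝ) := by positivity
    positivity
  have hB2pos : 0 < B2 := by positivity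
  -- pointwise bounds
  have key1 : ∀ t ∈ Set.Ioc (0:ℝ) R,
      ENNReal.ofReal ((4 * Real.pi * t) ^ (-(d:ℝ)/2) * Real.exp (-(r^2 / (4*t))) * u t)
        ≤ ENNReal.ofReal (B1 * t ^ (p - 1)) := by
    intro t ht
    obtain ⟨ht0, htR⟩ := ht
    apply ENNReal.ofReal_le_ofReal
    have hxpos : 0 < r ^ 2 / (4 * t) := by positivity
    have hexp : Real.exp (-(r^2 / (4*t))) ≤ (d.factorial : ℝ) / (r^2 / (4*t)) ^ d :=
      exp_neg_le_factorial_div d hxpos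
    have hφt : (φ t⁻¹)⁻¹ ≤ Q := by
      rw [hQdef]
      apply inv_anti₀ hQ0
      exact hφmono _ _ (by positivity) (by
        apply inv_anti₀ ht0 htR)
    have hut : u t ≤ C * t⁻¹ * Q := by
      calc u t ≤ C * t⁻¹ * (φ t⁻¹)⁻¹ := huub t ht0
        _ ≤ C * t⁻¹ * Q := by
            apply mul_le_mul_of_nonneg_left hφt (by positivity)
    have hsplit : (4 * Real.pi * t) ^ (-(d:ℝ)/2) = A * t ^ (-p) := by
      rw [hA, Real.mul_rpow hπ.le ht0.le, hp]
      ring_nf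
    have hexp' : (d.factorial : ℝ) / (r^2 / (4*t)) ^ d
        = (d.factorial : ℝ) * 4 ^ d * t ^ d / r ^ (2 * d) := by
      rw [div_pow, mul_pow, pow_mul]
      field_simp
    calc (4 * Real.pi * t) ^ (-(d:ℝ)/2) * Real.exp (-(r^2 / (4*t))) * u t
        ≤ (A * t ^ (-p)) * ((d.factorial : ℝ) * 4 ^ d * t ^ d / r ^ (2 * d))
            * (C * t⁻¹ * Q) := by
          rw [hsplit]
          apply mul_le_mul
          · apply mul_le_mul_of_nonneg_left _ (by positivity)
            rw [← hexp']; exact hexp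
          · exact hut
          · exact (hupos t ht0).le
          · positivity
      _ = B1 * t ^ (p - 1) := by
          rw [hB1]
          have h1 : (t:ℝ) ^ d = t ^ ((d:ℝ)) := by
            rw [Real.rpow_natCast]
          have h2 : (r:ℝ) ^ (2 * d) = r ^ ((2:ℝ) * (d:ℝ)) := by
            rw [← Real.rpow_natCast r (2*d)]; push_cast; ring_nf
          have h3 : t ^ (-p) * t ^ ((d:ℝ)) * t⁻¹ = t ^ (p - 1) := by
            rw [← Real.rpow_neg_one t, ← Real.rpow_add ht0, ← Real.rpow_add ht0]
            congr 1
            rw [hp]; ring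
          have h4 : (r:ℝ) ^ (-(2:ℝ) * (d:ℝ)) = (r ^ ((2:ℝ) * (d:ℝ)))⁻¹ := by
            rw [← Real.rpow_neg hr.le]; ring_nf
          rw [h1, h2, div_eq_mul_inv, ← h4, ← h3]
          ring
  have key2 : ∀ t ∈ Set.Ioi R,
      ENNReal.ofReal ((4 * Real.pi * t) ^ (-(d:ℝ)/2) * Real.exp (-(r^2 / (4*t))) * u t)
        ≤ ENNReal.ofReal (B2 * t ^ (-p)) := by
    intro t ht
    have ht0 : 0 < t := hRpos.trans ht
    apply ENNReal.ofReal_le_ofReal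
    have hut : u t ≤ C * R⁻¹ * Q := by
      calc u t ≤ u R := humono R t hRpos (le_of_lt ht)
        _ ≤ C * R⁻¹ * (φ R⁻¹)⁻¹ := huub R hRpos
        _ = C * R⁻¹ * Q := rfl
    have hsplit : (4 * Real.pi * t) ^ (-(d:ℝ)/2) = A * t ^ (-p) := by
      rw [hA, Real.mul_rpow hπ.le ht0.le, hp]
      ring_nf
    have hexp : Real.exp (-(r^2 / (4*t))) ≤ 1 := by
      apply Real.exp_le_one_iff.mpr
      have : 0 < r ^ 2 / (4 * t) := by positivity
      linarith
    calc (4 * Real.pi * t) ^ (-(d:ℝ)/2) * Real.exp (-(r^2 / (4*t))) * u t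
        ≤ (A * t ^ (-p)) * 1 * (C * R⁻¹ * Q) := by
          rw [hsplit]
          apply mul_le_mul
          · apply mul_le_mul_of_nonneg_left hexp (by positivity)
          · exact hut
          · exact (hupos t ht0).le
          · positivity
      _ = B2 * t ^ (-p) := by rw [hB2]; ring
  -- split the integral
  have hsplitset : Set.Ioc (0:ℝ) R ∪ Set.Ioi R = Set.Ioi (0:ℝ) :=
    Set.Ioc_union_Ioi_eq_Ioi hRpos.le
  rw [← hsplitset, lintegral_union measurableSet_Ioi
      (Set.Ioc_disjoint_Ioi le_rfl)]
  -- compute the two integrals of the bounds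
  have hI1 : (∫⁻ t in Set.Ioc (0:ℝ) R, ENNReal.ofReal (B1 * t ^ (p - 1)))
      = ENNReal.ofReal (B1 * (R ^ p / p)) := by
    have hint : IntegrableOn (fun t : ℝ => B1 * t ^ (p - 1)) (Set.Ioc 0 R) := by
      apply Integrable.const_mul
      have := (intervalIntegral.intervalIntegrable_rpow' (a := 0) (b := R) (r := p - 1) (by linarith))
      rwa [intervalIntegrable_iff_integrableOn_Ioc_of_le hRpos.le] at this
    rw [← ofReal_integral_eq_lintegral_ofReal hint]
    · congr 1
      rw [MeasureTheory.integral_const_mul]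
      congr 1
      rw [← intervalIntegral.integral_of_le hRpos.le,
        integral_rpow (Or.inl (by linarith))]
      rw [Real.zero_rpow (by linarith), sub_add_cancel]
      simp
    · filter_upwards [ae_restrict_mem measurableSet_Ioc] with t ht
      have := ht.1
      positivity
  have hI2 : (∫⁻ t in Set.Ioi R, ENNReal.ofReal (B2 * t ^ (-p)))
      = ENNReal.ofReal (B2 * (R ^ (1 - p) / (p - 1))) := by
    have hint : IntegrableOn (fun t : ℝ => B2 * t ^ (-p)) (Set.Ioi R) := by
      apply Integrable.const_mul
      exact integrableOn_Ioi_rpow_of_lt (by linarith) hRpos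
    rw [← ofReal_integral_eq_lintegral_ofReal hint]
    · congr 1
      rw [MeasureTheory.integral_const_mul, integral_Ioi_rpow_of_lt (by linarith) hRpos]
      congr 1
      rw [neg_div, ← div_neg]
      congr 1 <;> ring_nf
    · filter_upwards [ae_restrict_mem measurableSet_Ioi] with t ht
      have ht0 : 0 < t := hRpos.trans ht
      positivity
  calc (∫⁻ t in Set.Ioc (0:ℝ) R,
          ENNReal.ofReal ((4 * Real.pi * t) ^ (-(d:ℝ)/2) * Real.exp (-(r^2 / (4*t))) * u t))
        + (∫⁻ t in Set.Ioi R,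
          ENNReal.ofReal ((4 * Real.pi * t) ^ (-(d:ℝ)/2) * Real.exp (-(r^2 / (4*t))) * u t))
      ≤ (∫⁻ t in Set.Ioc (0:ℝ) R, ENNReal.ofReal (B1 * t ^ (p - 1)))
        + (∫⁻ t in Set.Ioi R, ENNReal.ofReal (B2 * t ^ (-p))) := by
        exact add_le_add (setLIntegral_mono' measurableSet_Ioc key1)
          (setLIntegral_mono' measurableSet_Ioi key2)
    _ = ENNReal.ofReal (B1 * (R ^ p / p)) + ENNReal.ofReal (B2 * (R ^ (1 - p) / (p - 1))) := by
        rw [hI1, hI2]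
    _ ≤ ENNReal.ofReal (C * A * K * r ^ (-(d:ℝ)) * Q) := by
        rw [← ENNReal.ofReal_add (by positivity) (by
          have h1 : (0:ℝ) < R ^ (1 - p) := Real.rpow_pos_of_pos hRpos _
          have h2 : (0:ℝ) < p - 1 := by linarith
          positivity)]
        apply ENNReal.ofReal_le_ofReal
        -- final real arithmetic
        have hRp : R ^ p = r ^ ((d:ℝ)) := by
          rw [hRdef, ← Real.rpow_natCast r 2, ← Real.rpow_mul hr.le]
          congr 1
          rw [hp]; push_cast; ring
        have hR1p : R⁻¹ * R ^ (1 - p) = r ^ (-(d:ℝ)) := by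
          rw [← Real.rpow_neg_one R, ← Real.rpow_add hRpos, hRdef,
            ← Real.rpow_natCast r 2, ← Real.rpow_mul hr.le]
          congr 1
          rw [hp]; push_cast; ring
        have hr2d : r ^ (-(2:ℝ) * (d:ℝ)) * r ^ ((d:ℝ)) = r ^ (-(d:ℝ)) := by
          rw [← Real.rpow_add hr]
          congr 1; ring
        have e1 : B1 * (R ^ p / p)
            = C * A * Q * ((d.factorial : ℝ) * 4 ^ d / p) * r ^ (-(d:ℝ)) := by
          rw [hB1, hRp, ← hr2d]; ring
        have e2 : B2 * (R ^ (1 - p) / (p - 1))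
            = C * A * Q * (1 / (p - 1)) * r ^ (-(d:ℝ)) := by
          rw [hB2, ← hR1p]; ring
        rw [e1, e2, hK]
        apply le_of_eq
        ring
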